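/- Intensity scaling with a random (non-black) baseline can create new extrema: for the input z(x) = x² + 1 and the baseline z'(x) = 10·cos(x), the intermediate path point at α = 1/2, namely L(x) = (1 − 1/2)·z'(x) + (1/2)·z(x) = 5·cos(x) + (x² + 1)/2, has a local maximum at x = 0 (indeed L'(0) = 0 and L''(0) = −4 < 0), whereas the input z(x) = x² + 1 has no local maximum anywhere on ℝ. -/

import Mathlib

private lemma hasDerivL (x : ℝ) :
    HasDerivAt (fun x : ℝ => 5 * Real.cos x + (x ^ 2 + 1) / 2)
      (5 * (-Real.sin x) + x) x := by
  have h1 : HasDerivAt (fun x : ℝ => 5 * Real.cos x) (5 * (-Real.sin x)) x :=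
    (Real.hasDerivAt_cos x).const_mul 5
  have h2 : HasDerivAt (fun x : ℝ => (x ^ 2 + 1) / 2) x x := by
    have : HasDerivAt (fun x : ℝ => x ^ 2 + 1) (2 * x ^ 1) x :=
      (hasDerivAt_pow 2 x).add_const 1
    simpa using this.div_const 2
  exact h1.add h2

private lemma derivL :
    deriv (fun x : ℝ => 5 * Real.cos x + (x ^ 2 + 1) / 2)
      = fun x : ℝ => 5 * (-Real.sin x) + x := by
  funext x
  exact (hasDerivL x).deriv

/-- Intensity scaling with a random (non-black) baseline can create new extrema:
for the input `z(x) = x² + 1` and baseline `z'(x) = 10·cos(x)`, the intermediate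
path point at `α = 1/2`, namely `L(x) = (1 − 1/2)·z'(x) + (1/2)·z(x)
= 5·cos(x) + (x² + 1)/2`, has a local maximum at `x = 0` (with `L'(0) = 0` and
`L''(0) = −4 < 0`), whereas the input `z(x) = x² + 1` has no local maximum
anywhere on `ℝ`. -/
theorem intensity_scaling_random_baseline_creates_extrema :
    (∀ x : ℝ, (1 - 1 / 2) * (10 * Real.cos x) + (1 / 2) * (x ^ 2 + 1)
        = 5 * Real.cos x + (x ^ 2 + 1) / 2) ∧
    IsLocalMax (fun x : ℝ => 5 * Real.cos x + (x ^ 2 + 1) / 2) 0 ∧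
    deriv (fun x : ℝ => 5 * Real.cos x + (x ^ 2 + 1) / 2) 0 = 0 ∧
    deriv (deriv (fun x : ℝ => 5 * Real.cos x + (x ^ 2 + 1) / 2)) 0 = -4 ∧
    (-4 : ℝ) < 0 ∧
    (∀ x : ℝ, ¬ IsLocalMax (fun x : ℝ => x ^ 2 + 1) x) := by
  refine ⟨fun x => by ring, ?_, ?_, ?_, by norm_num, ?_⟩
  · -- local max at 0
    have hball : Metric.ball (0 : ℝ) Real.pi ∈ nhds (0 : ℝ) :=
      Metric.ball_mem_nhds _ Real.pi_pos
    refine Filter.eventually_of_mem hball (fun x hx => ?_)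
    have hx' : |x| ≤ Real.pi := by
      rw [Metric.mem_ball, Real.dist_eq, sub_zero] at hx
      exact hx.le
    have hcos := Real.cos_le_one_sub_mul_cos_sq hx'
    have hpi : Real.pi ^ 2 < 20 := by
      nlinarith [Real.pi_lt_d2, Real.pi_gt_three]
    have hpi0 : (0:ℝ) < Real.pi ^ 2 := by positivity
    simp only [Real.cos_zero]
    have h110 : (1:ℝ)/10 ≤ 2 / Real.pi ^ 2 := by
      rw [div_le_div_iff₀ (by norm_num) hpi0]; nlinarith
    have : 2 / Real.pi ^ 2 * x ^ 2 ≥ x ^ 2 / 10 := by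
      nlinarith [sq_nonneg x]
    nlinarith [this, hcos]
  · rw [derivL]; simp
  · rw [derivL]
    have h : HasDerivAt (fun x : ℝ => 5 * (-Real.sin x) + x)
        (5 * (-Real.cos 0) + 1) 0 := by
      have := ((Real.hasDerivAt_sin 0).neg.const_mul (5:ℝ)).add (hasDerivAt_id' 0)
      exact this
    rw [h.deriv]
    simp
    norm_num
  · intro x h
    obtain ⟨ε, hε, hle⟩ := Metric.eventually_nhds_iff.mp h
    rcases le_or_gt 0 x with hx | hx
    · have := hle (y := x + ε / 2) (by rw [Real.dist_eq, show x + ε/2 - x = ε/2 by ring, abs_of_pos (by linarith)]; linarith)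
      simp only at this
      nlinarith
    · have := hle (y := x - ε / 2) (by rw [Real.dist_eq, show x - ε/2 - x = -(ε/2) by ring, abs_neg, abs_of_pos (by linarith)]; linarith)
      simp only at this
      nlinarith
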